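/- arXiv:1802.01851 — 7 statements merged into one kernel-verified Lean document; each statement's English description precedes it below -/
import Mathlib

section
/- Let H be a group with trivial center such that the short exact sequence 1 → Inn(H) → Aut(H) → Out(H) → 1 splits. Then every extension of H by a finite group G (i.e., every short exact sequence 1 → H → Γ → G → 1 with G finite) splits, so Γ is a semidirect product H ⋊ G. -/
/-- The subgroup of inner automorphisms is normal in `Aut(H)`. -/
instance innNormal (H : Type) [Group H] :
    ((MulAut.conj : H →* MulAut H).range).Normal := by
  constructor
  rintro x ⟨h, rfl⟩ g
  exact ⟨g h, by ext y; simp [mul_assoc]⟩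

/-- If `H` has trivial center and the exact sequence
`1 → Inn(H) → Aut(H) → Out(H) → 1` splits, then every extension of `H` by a finite
group `G` splits, i.e. is a semidirect product `H ⋊ G`. -/
theorem weak_extension_splits (H : Type) [Group H]
    (hZ : Subgroup.center H = ⊥)
    (hsplit : ∃ σ : (MulAut H ⧸ (MulAut.conj : H →* MulAut H).range) →* MulAut H,
      ∀ a, QuotientGroup.mk' ((MulAut.conj : H →* MulAut H).range) (σ a) = a)
    (Γ G : Type) [Group Γ] [Group G] [Finite G]
    (ι : H →* Γ) (π : Γ →* G) (hι : Function.Injective ι)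
    (hπ : Function.Surjective π) (hexact : ι.range = π.ker) :
    ∃ s : G →* Γ, ∀ g, π (s g) = g := by
  classical
  obtain ⟨σ, hσ⟩ := hsplit
  haveI hN : ι.range.Normal := hexact ▸ π.normal_ker
  set e : H ≃* ι.range := MonoidHom.ofInjective hι with he
  -- conjugation action of Γ on H
  set φ : Γ →* MulAut H :=
    ((MulAut.congr e.symm).toMonoidHom.comp MulAut.conjNormal) with hφ
  have key : ∀ (γ : Γ) (y : H), ι (φ γ y) = γ * ι y * γ⁻¹ := by
    intro γ y
    have : φ γ y = e.symm (MulAut.conjNormal γ (e y)) := rfl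
    rw [this]
    have h1 : ι (e.symm (MulAut.conjNormal γ (e y)))
        = ((MulAut.conjNormal γ (e y) : ι.range) : Γ) := by
      conv_lhs => rw [show (ι : H → Γ) = fun h => ((e h : ι.range) : Γ) from
        funext fun h => (MonoidHom.ofInjective_apply hι).symm]
      simp
    rw [h1, MulAut.conjNormal_apply]
    rfl
  have hφι : ∀ h : H, φ (ι h) = MulAut.conj h := by
    intro h
    ext y
    apply hι
    rw [key]
    simp [mul_assoc]
  have hconj_inj : Function.Injective (MulAut.conj : H →* MulAut H) := by
    rw [← MonoidHom.ker_eq_bot_iff, ← hZ]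
    ext h
    simp only [MonoidHom.mem_ker, Subgroup.mem_center_iff]
    constructor
    · intro hh g
      have h2 := DFunLike.congr_fun hh g
      simp only [MulAut.conj_apply, MulAut.one_apply] at h2
      have : h * g = g * h := by
        have := congrArg (· * h) h2
        simpa [mul_assoc] using this
      exact this.symm
    · intro hh
      ext y
      simp only [MulAut.conj_apply, MulAut.one_apply]
      rw [← hh y]
      group
  set q := QuotientGroup.mk' ((MulAut.conj : H →* MulAut H).range) with hq
  have hker : π.ker ≤ (q.comp φ).ker := by
    intro γ hγ
    rw [← hexact] at hγ
    obtain ⟨h, rfl⟩ := hγ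
    simp only [MonoidHom.mem_ker, MonoidHom.comp_apply, hφι]
    rw [hq, QuotientGroup.mk'_apply, QuotientGroup.eq_one_iff]
    exact ⟨h, rfl⟩
  set θ := π.liftOfRightInverse (Function.surjInv hπ)
    (Function.rightInverse_surjInv hπ) ⟨q.comp φ, hker⟩ with hθdef
  have hθ : ∀ γ : Γ, θ (π γ) = q (φ γ) := fun γ =>
    π.liftOfRightInverse_comp_apply _ _ ⟨q.comp φ, hker⟩ γ
  set ψ : Γ →* MulAut H := (σ.comp θ).comp π with hψ
  set K : Subgroup Γ := φ.eqLocus ψ with hK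
  set p : K →* G := π.comp K.subtype with hp
  have hinj : Function.Injective p := by
    rw [← MonoidHom.ker_eq_bot_iff, Subgroup.eq_bot_iff_forall]
    rintro ⟨γ, hγK⟩ hγ
    simp only [hp, MonoidHom.mem_ker, MonoidHom.comp_apply, Subgroup.coe_subtype] at hγ
    have hmem : γ ∈ ι.range := hexact ▸ hγ
    obtain ⟨h, rfl⟩ := hmem
    have h1 : φ (ι h) = ψ (ι h) := hγK
    have h2 : ψ (ι h) = 1 := by
      simp only [hψ, MonoidHom.comp_apply, hγ, map_one]
    rw [hφι, h2] at h1
    have : h = 1 := hconj_inj (by rw [h1, map_one])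
    simp [this]
  have hsurj : Function.Surjective p := by
    intro g
    obtain ⟨γ, hγ⟩ := hπ g
    have h1 : q (φ γ) = q (σ (θ g)) := by
      rw [← hθ γ, hγ, hσ]
    rw [QuotientGroup.mk'_apply, QuotientGroup.mk'_apply, QuotientGroup.eq] at h1
    obtain ⟨h, hh⟩ := h1
    refine ⟨⟨γ * ι h, ?_⟩, ?_⟩
    · show φ (γ * ι h) = ψ (γ * ι h)
      have hπγ' : π (γ * ι h) = g := by
        have : π (ι h) = 1 := by
          have : ι h ∈ π.ker := hexact ▸ ⟨h, rfl⟩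
          exact this
        rw [map_mul, this, mul_one, hγ]
      have hψ' : ψ (γ * ι h) = σ (θ g) := by
        simp only [hψ, MonoidHom.comp_apply, hπγ']
      rw [hψ', map_mul, hφι, hh]
      group
    · show π (γ * ι h) = g
      have : π (ι h) = 1 := by
        have hm : ι h ∈ π.ker := hexact ▸ ⟨h, rfl⟩
        exact hm
      rw [map_mul, this, mul_one, hγ]
  set E := MulEquiv.ofBijective p ⟨hinj, hsurj⟩ with hE
  refine ⟨K.subtype.comp E.symm.toMonoidHom, fun g => ?_⟩
  have : p (E.symm g) = g := by
    have := E.apply_symm_apply g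
    exact this
  exact this
end

section
/- Let H be a group and U, V two normal subgroups of H with trivial intersection. Then for every normal subgroup K of H with KU = KV = H, the quotient group H/K is abelian. -/
/-- If `U, V` are normal subgroups of `H` with trivial intersection, then for every
normal subgroup `K` of `H` with `KU = KV = H`, the quotient `H/K` is abelian. -/
theorem quotient_abelian_of_two_complements (H : Type) [Group H]
    (U V K : Subgroup H) [U.Normal] [V.Normal] [K.Normal]
    (hUV : U ⊓ V = ⊥) (hKU : K ⊔ U = ⊤) (hKV : K ⊔ V = ⊤) :
    ∀ a b : H ⧸ K, a * b = b * a := by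
  intro a b
  obtain ⟨x, rfl⟩ := QuotientGroup.mk_surjective a
  obtain ⟨y, rfl⟩ := QuotientGroup.mk_surjective b
  have hx : x ∈ ((K ⊔ U : Subgroup H) : Set H) := by rw [hKU]; trivial
  have hy : y ∈ ((K ⊔ V : Subgroup H) : Set H) := by rw [hKV]; trivial
  rw [Subgroup.normal_mul] at hx hy
  obtain ⟨k, hk, u, hu, rfl⟩ := hx
  obtain ⟨k', hk', v, hv, rfl⟩ := hy
  have comm : u * v = v * u := by
    have h1 : u * v * u⁻¹ * v⁻¹ ∈ U := by
      have := ‹U.Normal›.conj_mem _ (Subgroup.inv_mem U hu) v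
      simpa [mul_assoc] using U.mul_mem hu this
    have h2 : u * v * u⁻¹ * v⁻¹ ∈ V := by
      have := ‹V.Normal›.conj_mem _ hv u
      simpa [mul_assoc] using V.mul_mem this (Subgroup.inv_mem V hv)
    have : u * v * u⁻¹ * v⁻¹ ∈ U ⊓ V := ⟨h1, h2⟩
    rw [hUV, Subgroup.mem_bot, mul_inv_eq_one, mul_inv_eq_iff_eq_mul] at this
    exact this
  have hku : (QuotientGroup.mk (k * u) : H ⧸ K) = QuotientGroup.mk u := by
    exact (QuotientGroup.eq (s := K)).mpr (by
      simpa [mul_assoc] using ‹K.Normal›.conj_mem _ (K.inv_mem hk) u⁻¹)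
  have hkv : (QuotientGroup.mk (k' * v) : H ⧸ K) = QuotientGroup.mk v := by
    exact (QuotientGroup.eq (s := K)).mpr (by
      simpa [mul_assoc] using ‹K.Normal›.conj_mem _ (K.inv_mem hk') v⁻¹)
  rw [hku, hkv, ← QuotientGroup.mk_mul, ← QuotientGroup.mk_mul, comm]
end

section
/- Let S be a non-abelian simple group, G a group, and H₁, H₂ normal subgroups of G. If S is not a quotient of G/H₁ and not a quotient of G/H₂, then S is not a quotient of G/(H₁ ∩ H₂). -/
/-- If a non-abelian simple group `S` is a quotient neither of `G/H₁` nor of `G/H₂`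
(for `H₁, H₂` normal in `G`), then `S` is not a quotient of `G/(H₁ ∩ H₂)`. -/
theorem not_quotient_of_inf (S : Type) [Group S] [IsSimpleGroup S]
    (hna : ¬ ∀ a b : S, a * b = b * a)
    (G : Type) [Group G] (H₁ H₂ : Subgroup G) [H₁.Normal] [H₂.Normal]
    (h1 : ¬ ∃ f : G ⧸ H₁ →* S, Function.Surjective f)
    (h2 : ¬ ∃ f : G ⧸ H₂ →* S, Function.Surjective f) :
    ¬ ∃ f : G ⧸ (H₁ ⊓ H₂) →* S, Function.Surjective f := by
  rintro ⟨f, hf⟩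
  set φ : G →* S := f.comp (QuotientGroup.mk' (H₁ ⊓ H₂)) with hφdef
  have hφsurj : Function.Surjective φ :=
    hf.comp (QuotientGroup.mk'_surjective _)
  have hker : ∀ x ∈ H₁ ⊓ H₂, φ x = 1 := by
    intro x hx
    simp [hφdef, MonoidHom.comp_apply, (QuotientGroup.eq_one_iff x).2 hx]
  -- helper: if Hᵢ ≤ ker φ we get a surjection from G ⧸ Hᵢ
  have key : ∀ (H : Subgroup G) [H.Normal], (∀ x ∈ H, φ x = 1) →
      ∃ g : G ⧸ H →* S, Function.Surjective g := by
    intro H _ hH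
    refine ⟨QuotientGroup.lift H φ hH, ?_⟩
    intro s
    obtain ⟨x, hx⟩ := hφsurj s
    exact ⟨QuotientGroup.mk x, hx⟩
  -- images of H₁, H₂ under φ are normal in S
  have hn1 : (H₁.map φ).Normal := Subgroup.Normal.map ‹H₁.Normal› φ hφsurj
  have hn2 : (H₂.map φ).Normal := Subgroup.Normal.map ‹H₂.Normal› φ hφsurj
  rcases hn1.eq_bot_or_eq_top with hb1 | ht1
  · exact h1 (key H₁ (fun x hx => by
      have : φ x ∈ H₁.map φ := Subgroup.mem_map_of_mem φ hx
      rw [hb1] at this; simpa using this))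
  rcases hn2.eq_bot_or_eq_top with hb2 | ht2
  · exact h2 (key H₂ (fun x hx => by
      have : φ x ∈ H₂.map φ := Subgroup.mem_map_of_mem φ hx
      rw [hb2] at this; simpa using this))
  -- both images are all of S; commutators vanish, so S is abelian
  apply hna
  intro a b
  have ha : a ∈ H₁.map φ := ht1 ▸ Subgroup.mem_top a
  have hb : b ∈ H₂.map φ := ht2 ▸ Subgroup.mem_top b
  obtain ⟨x, hx, hxa⟩ := ha
  obtain ⟨y, hy, hyb⟩ := hb
  have hcomm : x * y * x⁻¹ * y⁻¹ ∈ H₁ ⊓ H₂ := by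
    constructor
    · have h' : y * x⁻¹ * y⁻¹ ∈ H₁ := Subgroup.Normal.conj_mem ‹H₁.Normal› x⁻¹ (inv_mem hx) y
      have := H₁.mul_mem hx h'
      simpa [mul_assoc] using this
    · have h' : x * y * x⁻¹ ∈ H₂ := Subgroup.Normal.conj_mem ‹H₂.Normal› y hy x
      exact H₂.mul_mem h' (inv_mem hy)
  have := hker _ hcomm
  rw [map_mul, map_mul, map_mul, map_inv, map_inv, hxa, hyb] at this
  have h := mul_eq_one_iff_eq_inv.mp this
  calc a * b = (a * b * a⁻¹ * b⁻¹) * (b * a) := by group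
  _ = b * a := by rw [this]; group
end

section
/- Let 𝒞 be a class of finite groups that is stable under quotients. Then its dual class 𝒞* is stable under extensions: if G is a finite group with a normal subgroup H such that H ∈ 𝒞* and G/H ∈ 𝒞*, then G ∈ 𝒞*. -/
/-- A class of groups, given as a predicate on groups. -/
def GroupClass : Type 1 := (G : Type) → [inst : Group G] → Prop

/-- The class `C` is closed under isomorphism. -/
def IsoClosed (C : GroupClass) : Prop :=
  ∀ (G : Type) [Group G] (G' : Type) [Group G'], Nonempty (G ≃* G') → C G → C G'

/-- The dual class `C*`: groups `G` such that the only normal subgroup `H` with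
`G/H ∈ C` is `H = G`. -/
def dualClass (C : GroupClass) : GroupClass :=
  fun G _ => ∀ (H : Subgroup G) [H.Normal], C (G ⧸ H) → H = ⊤

/-- The associated class `Ĉ`: groups admitting a subnormal series whose successive
quotients all lie in `C`. -/
def assocClass (C : GroupClass) : GroupClass := fun G _ =>
  ∃ (n : ℕ) (s : Fin (n + 1) → Subgroup G),
    s 0 = ⊥ ∧ s (Fin.last n) = ⊤ ∧
    (∀ i : Fin n, s i.castSucc ≤ s i.succ) ∧
    ∀ i : Fin n,
      ∃ hn : ((s i.castSucc).subgroupOf (s i.succ)).Normal,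
        letI := hn
        C (↥(s i.succ) ⧸ (s i.castSucc).subgroupOf (s i.succ))

/-- If `C` is stable under quotients, then the dual class `C*` is stable under
extensions. -/
theorem dualClass_extension_stable (C : GroupClass) (hiso : IsoClosed C)
    (hquot : ∀ (G : Type) [Group G] [Finite G] (H : Subgroup G) [H.Normal],
      C G → C (G ⧸ H))
    (G : Type) [Group G] [Finite G] (H : Subgroup G) [H.Normal]
    (h1 : dualClass C ↥H) (h2 : dualClass C (G ⧸ H)) : dualClass C G := by
  intro K _ hCK
  -- Step 1: C (G ⧸ (K ⊔ H))
  have hKle : K ≤ K ⊔ H := le_sup_left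
  have hC1 : C (G ⧸ (K ⊔ H)) := by
    have := hquot (G ⧸ K) ((K ⊔ H).map (QuotientGroup.mk' K)) hCK
    exact hiso _ _ ⟨QuotientGroup.quotientQuotientEquivQuotient K (K ⊔ H) hKle⟩ this
  -- Step 2: H ⊔ K = ⊤ via h2
  have hHle : H ≤ K ⊔ H := le_sup_right
  have htop : K ⊔ H = ⊤ := by
    have hC2 : C ((G ⧸ H) ⧸ ((K ⊔ H).map (QuotientGroup.mk' H))) :=
      hiso _ _ ⟨(QuotientGroup.quotientQuotientEquivQuotient H (K ⊔ H) hHle).symm⟩ hC1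
    have := h2 ((K ⊔ H).map (QuotientGroup.mk' H)) hC2
    have : (K ⊔ H).map (QuotientGroup.mk' H) = ⊤ := this
    have hcomap := congrArg (Subgroup.comap (QuotientGroup.mk' H)) this
    rwa [Subgroup.comap_map_eq, QuotientGroup.ker_mk', Subgroup.comap_top,
      sup_eq_left.mpr hHle] at hcomap
  -- Step 3: H ≤ K via h1
  have hsub : H ≤ K := by
    have e1 : ↥H ⧸ K.subgroupOf H ≃* ↥(H ⊔ K) ⧸ K.subgroupOf (H ⊔ K) :=
      QuotientGroup.quotientInfEquivProdNormalQuotient H K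
    have htop' : H ⊔ K = ⊤ := by rw [sup_comm]; exact htop
    have e2 : ↥(H ⊔ K) ⧸ K.subgroupOf (H ⊔ K) ≃* G ⧸ K := by
      refine QuotientGroup.congr _ _ ((MulEquiv.subgroupCongr htop').trans Subgroup.topEquiv) ?_
      ext x
      rw [Subgroup.map_equiv_eq_comap_symm]
      simp [Subgroup.mem_subgroupOf, Subgroup.mem_comap, MulEquiv.symm_trans_apply]
    have hCH : C (↥H ⧸ K.subgroupOf H) :=
      hiso _ _ ⟨(e1.trans e2).symm⟩ hCK
    have := h1 (K.subgroupOf H) hCH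
    intro x hx
    have : (⟨x, hx⟩ : H) ∈ K.subgroupOf H := this ▸ Subgroup.mem_top _
    exact this
  rw [sup_eq_left.mpr hsub] at htop
  exact htop
end

section
/- For any class 𝒞 of finite groups, the dual class satisfies 𝒞* ⊆ 𝒞***, i.e., 𝒞* is contained in the dual of the bidual of 𝒞. Moreover, if 𝒞 is stable under quotients, then 𝒞* = 𝒞***. -/
lemma eq_top_of_forall {G : Type} [Group G] (H : Subgroup G) [H.Normal]
    (h : ∀ x : G ⧸ H, x = 1) : H = ⊤ :=
  by rw [Subgroup.eq_top_iff']; exact fun g => (QuotientGroup.eq_one_iff g).mp (h _)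

lemma forall_eq_one_of_dual (D : GroupClass) (hisoD : IsoClosed D) {Q : Type} [Group Q]
    (hd : dualClass D Q) (hc : D Q) : ∀ x : Q, x = 1 := by
  have h := hd ⊥ (hisoD Q (Q ⧸ (⊥ : Subgroup Q)) ⟨(QuotientGroup.quotientBot (G := Q)).symm⟩ hc)
  intro x
  have hx : x ∈ (⊥ : Subgroup Q) := h ▸ Subgroup.mem_top x
  simpa using hx

lemma isoClosed_dual (C : GroupClass) (h : IsoClosed C) : IsoClosed (dualClass C) := by
  intro G _ G' _ ⟨e⟩ hG H' _ hC'
  letI H : Subgroup G := H'.comap e.toMonoidHom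
  haveI : H.Normal := ‹H'.Normal›.comap e.toMonoidHom
  have hmap : H.map e.toMonoidHom = H' :=
    Subgroup.map_comap_eq_self_of_surjective e.surjective H'
  have hCq : C (G ⧸ H) := h _ _ ⟨(QuotientGroup.congr H H' e hmap).symm⟩ hC'
  have hH : H = ⊤ := hG H hCq
  rw [← hmap, hH]
  exact Subgroup.map_top_of_surjective _ e.surjective

lemma dualClass_quotient (C : GroupClass) (hiso : IsoClosed C) {G : Type} [Group G]
    (hG : dualClass C G) (H : Subgroup G) [H.Normal] : dualClass C (G ⧸ H) := by
  intro K _ hK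
  letI M : Subgroup G := K.comap (QuotientGroup.mk' H)
  haveI : M.Normal := ‹K.Normal›.comap (QuotientGroup.mk' H)
  have hHM : H ≤ M := by
    intro g hg
    have : QuotientGroup.mk' H g = 1 := (QuotientGroup.eq_one_iff g).mpr hg
    simp only [M, Subgroup.mem_comap, this]; exact K.one_mem
  have hmap : M.map (QuotientGroup.mk' H) = K :=
    Subgroup.map_comap_eq_self_of_surjective (QuotientGroup.mk'_surjective H) K
  have hCM : C (G ⧸ M) :=
    hiso _ _ ⟨(QuotientGroup.quotientMulEquivOfEq hmap.symm).trans
      (QuotientGroup.quotientQuotientEquivQuotient H M hHM)⟩ hK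
  have hM : M = ⊤ := hG M hCM
  rw [← hmap, hM]
  exact Subgroup.map_top_of_surjective _ (QuotientGroup.mk'_surjective H)

/-- One always has `C* ⊆ C***`, and if `C` is stable under quotients then
`C* = C***`. -/
theorem dual_subset_triple_dual (C : GroupClass) (hiso : IsoClosed C) :
    (∀ (G : Type) [Group G] [Finite G],
      dualClass C G → dualClass (dualClass (dualClass C)) G) ∧
    ((∀ (G : Type) [Group G] [Finite G] (H : Subgroup G) [H.Normal],
        C G → C (G ⧸ H)) →
      ∀ (G : Type) [Group G] [Finite G],
        dualClass C G ↔ dualClass (dualClass (dualClass C)) G) := by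
  have isoC1 := isoClosed_dual C hiso
  have part1 : ∀ (G : Type) [Group G] [Finite G],
      dualClass C G → dualClass (dualClass (dualClass C)) G := by
    intro G _ _ hG H _ hH2
    have hq : dualClass C (G ⧸ H) := dualClass_quotient C hiso hG H
    exact eq_top_of_forall H (forall_eq_one_of_dual (dualClass C) isoC1 hH2 hq)
  refine ⟨part1, fun hquot G _ _ => ⟨part1 G, ?_⟩⟩
  intro hG H _ hCH
  apply hG H
  intro K _ hK
  have hCq : C ((G ⧸ H) ⧸ K) := hquot (G ⧸ H) K hCH
  exact eq_top_of_forall K (forall_eq_one_of_dual C hiso hK hCq)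
end

section
/- Let 𝒞 be a class of finite groups. A finite group G belongs to the bidual class 𝒞** if and only if for every maximal normal subgroup H of G (i.e., H ⊴ G with G/H simple), the quotient G/H belongs to 𝒞. -/
lemma exists_simple_quotient (Q : Type) [Group Q] [Finite Q] [Nontrivial Q] :
    ∃ N : Subgroup Q, ∃ _ : N.Normal, N ≠ ⊤ ∧ IsSimpleGroup (Q ⧸ N) := by
  obtain ⟨N, ⟨hN, hNt⟩, hmax⟩ := Set.Finite.exists_maximalFor id
    {N : Subgroup Q | N.Normal ∧ N ≠ ⊤} (Set.toFinite _)
    ⟨⊥, inferInstance, bot_ne_top⟩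
  haveI := hN
  refine ⟨N, hN, hNt, ?_⟩
  haveI : Nontrivial (Q ⧸ N) := by
    obtain ⟨x, hx⟩ := not_forall.mp (mt (Subgroup.eq_top_iff' N).mpr hNt)
    exact ⟨(x : Q ⧸ N), 1, mt (QuotientGroup.eq_one_iff x).mp hx⟩
  constructor
  intro M hM
  have hK : (Subgroup.comap (QuotientGroup.mk' N) M).Normal := hM.comap _
  have hNK : N ≤ Subgroup.comap (QuotientGroup.mk' N) M := by
    intro x hx
    simp only [Subgroup.mem_comap, QuotientGroup.mk'_apply]
    rw [show ((x : Q) : Q ⧸ N) = 1 from (QuotientGroup.eq_one_iff x).mpr hx]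
    exact M.one_mem
  have hsurj : Function.Surjective (QuotientGroup.mk' N) := QuotientGroup.mk'_surjective N
  have hMK : Subgroup.map (QuotientGroup.mk' N) (Subgroup.comap (QuotientGroup.mk' N) M) = M :=
    Subgroup.map_comap_eq_self_of_surjective hsurj M
  by_cases htop : Subgroup.comap (QuotientGroup.mk' N) M = ⊤
  · right
    rw [← hMK, htop]
    exact Subgroup.map_top_of_surjective _ hsurj
  · left
    have := le_antisymm (hmax ⟨hK, htop⟩ hNK) hNK
    simp only [id] at this; rw [← hMK, this, eq_bot_iff]
    rintro x ⟨y, hy, rfl⟩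
    simpa only [Subgroup.mem_bot, QuotientGroup.mk'_apply] using (QuotientGroup.eq_one_iff y).mpr hy

/-- A finite group `G` lies in the bidual class `C**` if and only if `G/H ∈ C` for
every maximal normal subgroup `H` of `G` (i.e. every normal `H` with `G/H` simple). -/
theorem mem_bidual_iff (C : GroupClass) (hiso : IsoClosed C)
    (G : Type) [Group G] [Finite G] :
    dualClass (dualClass C) G ↔
      ∀ (H : Subgroup G) [H.Normal], IsSimpleGroup (G ⧸ H) → C (G ⧸ H) := by
  constructor
  · intro hG H hHn hsimp
    by_contra hC
    haveI := hsimp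
    have hdual : dualClass C (G ⧸ H) := by
      intro K hKn hCK
      rcases hKn.eq_bot_or_eq_top with hb | ht
      · subst hb
        exact absurd (hiso _ (G ⧸ H) ⟨QuotientGroup.quotientBot⟩ hCK) hC
      · exact ht
    have htop := hG H hdual
    haveI : Subsingleton (G ⧸ H) := by
      constructor
      intro a b
      induction a using QuotientGroup.induction_on
      induction b using QuotientGroup.induction_on
      rw [(QuotientGroup.eq_one_iff _).mpr (htop.symm ▸ Subgroup.mem_top _),
          (QuotientGroup.eq_one_iff _).mpr (htop.symm ▸ Subgroup.mem_top _)]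
    exact absurd hsimp.toNontrivial (not_nontrivial _)
  · intro h H hHn hHdual
    by_contra hne
    haveI : Nontrivial (G ⧸ H) := by
      obtain ⟨x, hx⟩ := not_forall.mp (mt (Subgroup.eq_top_iff' H).mpr hne)
      exact ⟨(x : G ⧸ H), 1, mt (QuotientGroup.eq_one_iff x).mp hx⟩
    obtain ⟨N, hNn, hNt, hNsimp⟩ := exists_simple_quotient (G ⧸ H)
    haveI := hNn
    set K := Subgroup.comap (QuotientGroup.mk' H) N with hKdef
    haveI hKn : K.Normal := hNn.comap _
    have hHK : H ≤ K := by
      intro x hx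
      simp only [hKdef, Subgroup.mem_comap, QuotientGroup.mk'_apply]
      rw [show ((x : G) : G ⧸ H) = 1 from (QuotientGroup.eq_one_iff x).mpr hx]
      exact N.one_mem
    have hmap : Subgroup.map (QuotientGroup.mk' H) K = N :=
      Subgroup.map_comap_eq_self_of_surjective (QuotientGroup.mk'_surjective H) N
    haveI hmn : (Subgroup.map (QuotientGroup.mk' H) K).Normal := hmap ▸ hNn
    have e := (QuotientGroup.quotientMulEquivOfEq hmap.symm).trans
      (QuotientGroup.quotientQuotientEquivQuotient H K hHK)
    haveI := hNsimp
    haveI : Nontrivial (G ⧸ K) := e.symm.toEquiv.nontrivial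
    haveI : IsSimpleGroup (G ⧸ K) :=
      IsSimpleGroup.isSimpleGroup_of_surjective e.toMonoidHom e.surjective
    have hCK : C (G ⧸ K) := h K this
    have hCN : C ((G ⧸ H) ⧸ N) := hiso (G ⧸ K) ((G ⧸ H) ⧸ N) ⟨e.symm⟩ hCK
    exact hNt (hHdual N hCN)
end

section
/- Let 𝒞 be a class of finite groups and G a non-trivial finite group. Then G ∈ 𝒞** (the bidual class) if and only if G/Rad(G) is isomorphic to a non-empty direct product of finite simple groups all belonging to 𝒞, where Rad(G) is the intersection of all maximal normal subgroups of G. -/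
/-- `H` is a maximal normal subgroup of `G` (equivalently, `G/H` is simple). -/
def IsMaximalNormal {G : Type} [Group G] (H : Subgroup G) : Prop :=
  H.Normal ∧ H ≠ ⊤ ∧ ∀ K : Subgroup G, K.Normal → H < K → K = ⊤

/-- The Baer radical of `G`: the intersection of all maximal normal subgroups. -/
def BaerRadical (G : Type) [Group G] : Subgroup G :=
  sInf {H | IsMaximalNormal H}

instance (G : Type) [Group G] : (BaerRadical G).Normal := by
  constructor
  intro n hn g
  rw [BaerRadical, Subgroup.mem_sInf] at hn ⊢
  intro H hH
  exact hH.1.conj_mem n (hn H hH) g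


open Pointwise

set_option maxHeartbeats 1000000

lemma exists_maximalNormal_ge {G : Type} [Group G] [Finite G] (H : Subgroup G)
    (hn : H.Normal) (hH : H ≠ ⊤) : ∃ M, IsMaximalNormal M ∧ H ≤ M := by
  obtain ⟨M, hM, hmax⟩ := Set.Finite.exists_maximalFor id
    {K : Subgroup G | K.Normal ∧ K ≠ ⊤ ∧ H ≤ K} (Set.toFinite _) ⟨H, hn, hH, le_rfl⟩
  refine ⟨M, ⟨hM.1, hM.2.1, ?_⟩, hM.2.2⟩
  intro K hK hMK
  by_contra hKtop
  exact (ne_of_lt hMK) (le_antisymm hMK.le (hmax ⟨hK, hKtop, hM.2.2.trans hMK.le⟩ hMK.le))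

lemma isSimpleGroup_quotient {G : Type} [Group G] {M : Subgroup G} [M.Normal]
    (h : IsMaximalNormal M) : IsSimpleGroup (G ⧸ M) := by
  obtain ⟨-, hne, hmax⟩ := h
  have hnt : Nontrivial (G ⧸ M) := by
    obtain ⟨g, hg⟩ : ∃ g, g ∉ M := by
      by_contra hc
      push_neg at hc
      exact hne ((Subgroup.eq_top_iff' M).2 hc)
    exact ⟨⟨(g : G ⧸ M), 1, by simpa [QuotientGroup.eq_one_iff] using hg⟩⟩
  refine ⟨fun H hH => ?_⟩
  have hHeq : H = (H.comap (QuotientGroup.mk' M)).map (QuotientGroup.mk' M) :=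
    (Subgroup.map_comap_eq_self_of_surjective (QuotientGroup.mk'_surjective M) H).symm
  have hle : M ≤ H.comap (QuotientGroup.mk' M) := fun m hm => by
    simp only [Subgroup.mem_comap, QuotientGroup.mk'_apply]
    exact (QuotientGroup.eq_one_iff m).2 hm ▸ H.one_mem
  rcases eq_or_lt_of_le hle with heq | hlt
  · left
    rw [hHeq, ← heq]
    refine (Subgroup.eq_bot_iff_forall _).2 ?_
    rintro x ⟨m, hm, rfl⟩
    simpa [QuotientGroup.eq_one_iff] using hm
  · right
    have := hmax _ (hH.comap _) hlt
    rw [hHeq, this]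
    exact Subgroup.map_top_of_surjective _ (QuotientGroup.mk'_surjective M)

lemma comap_isMaximalNormal {G H : Type} [Group G] [Group H] (f : G →* H)
    (hf : Function.Surjective f) {M : Subgroup H} (h : IsMaximalNormal M) :
    IsMaximalNormal (M.comap f) := by
  obtain ⟨hn, hne, hmax⟩ := h
  refine ⟨hn.comap f, ?_, ?_⟩
  · intro htop
    apply hne
    rw [← Subgroup.map_comap_eq_self_of_surjective hf M, htop,
      Subgroup.map_top_of_surjective f hf]
  · intro K hK hlt
    have hker : f.ker ≤ K := by
      refine le_trans ?_ hlt.le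
      intro x hx
      have : f x = 1 := hx
      simp only [Subgroup.mem_comap, this]
      exact M.one_mem
    have h1 : M < K.map f := by
      rw [← Subgroup.map_comap_eq_self_of_surjective hf M]
      refine lt_of_le_of_ne (Subgroup.map_mono hlt.le) ?_
      intro hEq
      exact hlt.not_ge (le_trans (Subgroup.le_comap_map f K)
        (le_of_eq (by rw [← hEq, Subgroup.map_comap_eq_self_of_surjective hf])))
    have h2 := hmax _ (hK.map f hf) h1
    rw [eq_top_iff]
    intro x _
    obtain ⟨k, hk, hkx⟩ := by
      have : f x ∈ K.map f := by rw [h2]; trivial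
      exact this
    have : k⁻¹ * x ∈ f.ker := by
      simp [MonoidHom.mem_ker, hkx]
    have hx : x = k * (k⁻¹ * x) := by group
    rw [hx]
    exact K.mul_mem hk (hker this)

lemma bidual_iff (C : GroupClass) (hiso : IsoClosed C) (G : Type) [Group G] [Finite G]
    [Nontrivial G] :
    dualClass (dualClass C) G ↔
      ∀ M : Subgroup G, ∀ h : IsMaximalNormal M, letI := h.1; C (G ⧸ M) := by
  constructor
  · intro h M hM
    letI := hM.1
    by_contra hC
    have hdual : dualClass C (G ⧸ M) := by
      intro H _ hCH
      haveI hs := isSimpleGroup_quotient hM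
      rcases Subgroup.Normal.eq_bot_or_eq_top ‹H.Normal› with hbot | htop
      · subst hbot
        exact absurd (hiso _ _ ⟨QuotientGroup.quotientBot⟩ hCH) hC
      · exact htop
    exact absurd (h M hdual) hM.2.1
  · intro hall H _ hH
    by_contra hne
    haveI : Nontrivial (G ⧸ H) := by
      obtain ⟨g, hg⟩ : ∃ g, g ∉ H := by
        by_contra hc; push_neg at hc
        exact hne ((Subgroup.eq_top_iff' H).2 hc)
      exact ⟨⟨(g : G ⧸ H), 1, by simpa [QuotientGroup.eq_one_iff] using hg⟩⟩
    obtain ⟨K, hK, -⟩ := exists_maximalNormal_ge (⊥ : Subgroup (G ⧸ H))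
      inferInstance bot_ne_top
    haveI := hK.1
    have hMmax : IsMaximalNormal (K.comap (QuotientGroup.mk' H)) :=
      comap_isMaximalNormal _ (QuotientGroup.mk'_surjective H) hK
    set M := K.comap (QuotientGroup.mk' H) with hMdef
    letI := hMmax.1
    have hCM : C (G ⧸ M) := hall M hMmax
    have hHM : H ≤ M := fun m hm => by
      simp only [hMdef, Subgroup.mem_comap, QuotientGroup.mk'_apply]
      exact (QuotientGroup.eq_one_iff m).2 hm ▸ K.one_mem
    have hmapeq : M.map (QuotientGroup.mk' H) = K :=
      Subgroup.map_comap_eq_self_of_surjective (QuotientGroup.mk'_surjective H) K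
    haveI : (M.map (QuotientGroup.mk' H)).Normal := hmapeq ▸ hK.1
    have e : ((G ⧸ H) ⧸ K) ≃* G ⧸ M :=
      (QuotientGroup.quotientMulEquivOfEq hmapeq.symm).trans
        (QuotientGroup.quotientQuotientEquivQuotient H M hHM)
    have : C ((G ⧸ H) ⧸ K) := hiso _ _ ⟨e.symm⟩ hCM
    exact absurd (hH K this) hK.2.1

lemma pi_surj {G : Type} {n : ℕ} [Group G] (M : Fin (n + 1) → Subgroup G)
    (hnorm : ∀ i, (M i).Normal)
    (hmax : ∀ i, IsMaximalNormal (M i))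
    (hirr : ∀ i, ¬ (⨅ j, ⨅ _ : j ≠ i, M j) ≤ M i) :
    letI := hnorm
    Function.Surjective (Pi.monoidHom (fun i => QuotientGroup.mk' (M i)) : G →* ∀ i, G ⧸ M i) := by
  letI := hnorm
  set φ : G →* ∀ i, G ⧸ M i := Pi.monoidHom (fun i => QuotientGroup.mk' (M i)) with hφdef
  have hφ : ∀ (x : G) (i : Fin (n + 1)), φ x i = (x : G ⧸ M i) := fun x i => rfl
  have hsingle : ∀ (i : Fin (n + 1)) (q : G ⧸ M i), Pi.mulSingle i q ∈ φ.range := by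
    intro i q
    obtain ⟨g, rfl⟩ := QuotientGroup.mk'_surjective (M i) q
    set N : Subgroup G := ⨅ j, ⨅ _ : j ≠ i, M j with hNdef
    haveI hNn : N.Normal := by
      constructor
      intro x hx g'
      simp only [hNdef, Subgroup.mem_iInf] at hx ⊢
      intro j hj
      exact (hnorm j).conj_mem x (hx j hj) g'
    have htop : N ⊔ M i = ⊤ := by
      haveI hsupn : (N ⊔ M i).Normal := Subgroup.sup_normal N (M i)
      refine (hmax i).2.2 _ hsupn (lt_of_le_of_ne le_sup_right ?_)
      intro hEq
      exact hirr i (hEq ▸ le_sup_left)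
    have hg : g ∈ (N : Set G) * (M i : Set G) := by
      rw [← Subgroup.mul_normal, htop]
      trivial
    obtain ⟨a, ha, b, hb, rfl⟩ := hg
    refine ⟨a, funext fun j => ?_⟩
    rcases eq_or_ne j i with rfl | hj
    · rw [hφ, Pi.mulSingle_eq_same, QuotientGroup.mk'_apply,
        QuotientGroup.mk_mul_of_mem a hb]
    · have haj : a ∈ M j := by
        have h1 : N ≤ M j := le_trans (iInf_le _ j) (iInf_le _ hj)
        exact h1 ha
      rw [hφ, Pi.mulSingle_eq_of_ne hj]
      exact (QuotientGroup.eq_one_iff a).2 haj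
  intro y
  have : y ∈ φ.range := by
    rw [← Finset.noncommProd_mulSingle y]
    exact Subgroup.noncommProd_mem _ _ fun i _ => hsingle i (y i)
  exact this

lemma exists_enum {α : Type} [Finite α] (T : Set α) (hne : T.Nonempty) :
    ∃ (n : ℕ) (M : Fin (n + 1) → α), Function.Injective M ∧ (∀ i, M i ∈ T) ∧
      ∀ a ∈ T, ∃ i, M i = a := by
  haveI : Fintype T := (Set.toFinite T).fintype
  obtain ⟨n, hn⟩ : ∃ n, Fintype.card T = n + 1 :=
    ⟨Fintype.card T - 1, (Nat.succ_pred_eq_of_pos (Fintype.card_pos_iff.2 hne.to_subtype)).symm⟩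
  let e : Fin (n + 1) ≃ T := (Fintype.equivFinOfCardEq hn).symm
  refine ⟨n, fun i => (e i : α), fun i j hij => e.injective (Subtype.coe_injective hij),
    fun i => (e i).2, fun a ha => ⟨e.symm ⟨a, ha⟩, by simp⟩⟩

lemma exists_pi_iso (G : Type) [Group G] [Finite G] [Nontrivial G] :
    ∃ (n : ℕ) (M : Fin (n + 1) → Subgroup G) (hmax : ∀ i, IsMaximalNormal (M i)),
      letI : ∀ i, (M i).Normal := fun i => (hmax i).1
      Nonempty ((G ⧸ BaerRadical G) ≃* ∀ i, G ⧸ M i) := by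
  classical
  obtain ⟨T, ⟨hT𝓜, hTinf⟩, hTmin⟩ := Set.Finite.exists_minimalFor id
    {T : Set (Subgroup G) | T ⊆ {H | IsMaximalNormal H} ∧ sInf T = BaerRadical G}
    (Set.toFinite _) ⟨{H | IsMaximalNormal H}, le_rfl, rfl⟩
  simp only [id] at hTmin
  have hRadne : BaerRadical G ≠ ⊤ := by
    obtain ⟨M, hM, -⟩ := exists_maximalNormal_ge (⊥ : Subgroup G) inferInstance bot_ne_top
    intro htop
    exact hM.2.1 (top_le_iff.1 (htop ▸ sInf_le (a := M) hM))
  have hTne : T.Nonempty := by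
    rcases T.eq_empty_or_nonempty with rfl | h
    · rw [← hTinf, sInf_empty] at hRadne
      exact absurd rfl hRadne
    · exact h
  have hirr : ∀ M ∈ T, ¬ sInf (T \ {M}) ≤ M := by
    intro M hM hle
    have h1 : sInf (T \ {M}) = BaerRadical G := by
      refine le_antisymm ?_ (hTinf ▸ sInf_le_sInf Set.diff_subset)
      rw [← hTinf]
      refine le_sInf fun A hA => ?_
      rcases eq_or_ne A M with rfl | hAM
      · exact hle
      · exact sInf_le ⟨hA, hAM⟩
    have := hTmin ⟨Set.diff_subset.trans hT𝓜, h1⟩ Set.diff_subset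
    exact ((Set.mem_diff M).1 (this hM)).2 rfl
  obtain ⟨n, M, hMinj, hMT, hMsurj⟩ := exists_enum T hTne
  have hmax : ∀ i, IsMaximalNormal (M i) := fun i => hT𝓜 (hMT i)
  have hinf : (⨅ i, M i) = BaerRadical G := by
    rw [← hTinf]
    refine le_antisymm (le_sInf fun A hA => ?_) (le_iInf fun i => sInf_le (hMT i))
    obtain ⟨i, rfl⟩ := hMsurj A hA
    exact iInf_le _ _
  have hirr' : ∀ i, ¬ (⨅ j, ⨅ _ : j ≠ i, M j) ≤ M i := by
    intro i hle
    refine hirr (M i) (hMT i) (le_trans ?_ hle)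
    refine le_iInf fun j => le_iInf fun hj => ?_
    exact sInf_le ⟨hMT j, fun h => hj (hMinj h)⟩
  letI : ∀ i, (M i).Normal := fun i => (hmax i).1
  refine ⟨n, M, hmax, ⟨?_⟩⟩
  set φ : G →* ∀ i, G ⧸ M i := Pi.monoidHom (fun i => QuotientGroup.mk' (M i)) with hφdef
  have hφ : ∀ (x : G) (i : Fin (n + 1)), φ x i = (x : G ⧸ M i) := fun x i => rfl
  have hker : φ.ker = BaerRadical G := by
    rw [← hinf]
    ext x
    simp only [MonoidHom.mem_ker, Subgroup.mem_iInf, funext_iff, Pi.one_apply]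
    exact forall_congr' fun i => by rw [hφ]; exact QuotientGroup.eq_one_iff x
  have hsurj : Function.Surjective φ := pi_surj M _ hmax hirr'
  exact (QuotientGroup.quotientMulEquivOfEq hker.symm).trans
    (QuotientGroup.quotientKerEquivOfSurjective φ hsurj)

/-- A non-trivial finite group `G` lies in the bidual class `C**` if and only if
`G/Rad(G)` is isomorphic to a non-empty direct product of finite simple groups all
belonging to `C`. -/
theorem mem_bidual_iff_quotient_radical (C : GroupClass) (hiso : IsoClosed C)
    (G : Type) [Group G] [Finite G] [Nontrivial G] :
    dualClass (dualClass C) G ↔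
      ∃ (n : ℕ) (S : Fin (n + 1) → Type) (instS : ∀ i, Group (S i)),
        letI := instS
        (∀ i, Finite (S i) ∧ IsSimpleGroup (S i) ∧ C (S i)) ∧
        Nonempty ((G ⧸ BaerRadical G) ≃* ∀ i, S i) := by
  rw [bidual_iff C hiso G]
  constructor
  · intro hall
    obtain ⟨n, M, hmax, hne⟩ := exists_pi_iso G
    letI : ∀ i, (M i).Normal := fun i => (hmax i).1
    refine ⟨n, fun i => G ⧸ M i, fun i => inferInstance,
      fun i => ⟨inferInstance, isSimpleGroup_quotient (hmax i), hall (M i) (hmax i)⟩, hne⟩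
  · rintro ⟨n, S, instS, hS, ⟨e⟩⟩ M hM
    letI := hM.1
    haveI : IsSimpleGroup (G ⧸ M) := isSimpleGroup_quotient hM
    have hRadle : BaerRadical G ≤ M := sInf_le hM
    let ψ : (G ⧸ BaerRadical G) →* G ⧸ M :=
      QuotientGroup.map _ _ (MonoidHom.id G) (by simpa using hRadle)
    have hψ : Function.Surjective ψ := by
      intro q
      obtain ⟨g, rfl⟩ := QuotientGroup.mk'_surjective M q
      exact ⟨QuotientGroup.mk g, rfl⟩
    let θ : (∀ i, S i) →* G ⧸ M := ψ.comp e.symm.toMonoidHom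
    have hθ : Function.Surjective θ := hψ.comp e.symm.surjective
    classical
    have hKn : ∀ i : Fin (n + 1), ((MonoidHom.mulSingle S i).range.map θ).Normal := by
      intro i
      refine Subgroup.Normal.map ?_ θ hθ
      constructor
      rintro x ⟨a, rfl⟩ y
      refine ⟨y i * a * (y i)⁻¹, ?_⟩
      rw [MonoidHom.mulSingle_apply, MonoidHom.mulSingle_apply]
      funext j
      rcases eq_or_ne j i with rfl | hj
      · simp
      · simp [Pi.mulSingle_eq_of_ne hj]
    by_cases hex : ∃ i, (MonoidHom.mulSingle S i).range.map θ = ⊤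
    · obtain ⟨i, hi⟩ := hex
      set f := θ.comp (MonoidHom.mulSingle S i) with hfdef
      have hfs : Function.Surjective f := by
        intro q
        have hq : q ∈ (MonoidHom.mulSingle S i).range.map θ := by rw [hi]; trivial
        obtain ⟨x, ⟨a, rfl⟩, rfl⟩ := hq
        exact ⟨a, rfl⟩
      haveI := (hS i).2.1
      rcases Subgroup.Normal.eq_bot_or_eq_top (f.normal_ker) with hb | ht
      · have hinj : Function.Injective f := f.ker_eq_bot_iff.1 hb
        exact hiso (S i) (G ⧸ M) ⟨MulEquiv.ofBijective f ⟨hinj, hfs⟩⟩ (hS i).2.2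
      · exfalso
        obtain ⟨q, hq⟩ := exists_ne (1 : G ⧸ M)
        obtain ⟨a, rfl⟩ := hfs q
        have ha : a ∈ f.ker := ht ▸ Subgroup.mem_top a
        exact hq ha
    · push_neg at hex
      exfalso
      have hallbot : ∀ i, (MonoidHom.mulSingle S i).range.map θ = ⊥ := fun i =>
        (Subgroup.Normal.eq_bot_or_eq_top (hKn i)).resolve_right (hex i)
      obtain ⟨q, hq⟩ := exists_ne (1 : G ⧸ M)
      obtain ⟨y, rfl⟩ := hθ q
      apply hq
      rw [← Finset.noncommProd_mulSingle y]; refine (Finset.map_noncommProd _ _ _ θ).trans ?_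
      refine (Finset.noncommProd_eq_pow_card _ _ _ 1 ?_).trans (one_pow _)
      intro i _
      have : θ (Pi.mulSingle i (y i)) ∈ (MonoidHom.mulSingle S i).range.map θ :=
        ⟨Pi.mulSingle i (y i), ⟨y i, rfl⟩, rfl⟩
      rw [hallbot i] at this
      simpa using this
end
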